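/- Let S be a nonempty finite type, G : S × S → ℝ a matrix with nonnegative off-diagonal entries, ψ : S → ℝ strictly positive, t > 0, m_s := exp(sG)ψ, P_{r,s}f(x) := (exp((s−r)G)(m_{t−s}·f))(x)/m_{t−r}(x) for 0 ≤ r ≤ s ≤ t, and A_s f(x) := (G(m_{t−s}·f)(x) − (Gm_{t−s})(x)·f(x))/m_{t−s}(x). Then: (i) for every fixed r ∈ [0,t], every f : S → ℝ and x ∈ S, the map s ↦ P_{r,s}f(x) is differentiable on [r,t] with derivative d/ds P_{r,s}f(x) = P_{r,s}(A_s f)(x), and P_{r,r} = id; (ii) uniqueness: if (U_{r,s})_{r ≤ s ≤ t} is any family of linear operators on ℝ^S such that U_{r,r} = id and, for every f and x, s ↦ U_{r,s}f(x) is differentiable on [r,t] with d/ds U_{r,s}f(x) = U_{r,s}(A_s f)(x), then U_{r,s} = P_{r,s} for all r ≤ s ≤ t. -/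

import Mathlib

open Matrix

section AuxInhom

open NormedSpace
set_option linter.unusedSectionVars false

variable {S : Type*} [Fintype S] [Nonempty S] [DecidableEq S]

private lemma entry_hasDerivAt' (G : Matrix S S ℝ) (u : ℝ) (x y : S) :
    HasDerivAt (fun v : ℝ => NormedSpace.exp (v • G) x y)
      ((G * NormedSpace.exp (u • G)) x y) u := by
  letI : SeminormedRing (Matrix S S ℝ) := Matrix.linftyOpSemiNormedRing
  letI : NormedRing (Matrix S S ℝ) := Matrix.linftyOpNormedRing
  letI : NormedAlgebra ℝ (Matrix S S ℝ) := Matrix.linftyOpNormedAlgebra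
  have h := hasDerivAt_exp_smul_const' (𝕂 := ℝ) G u
  have := ((Matrix.entryLinearMap ℝ ℝ x y).toContinuousLinearMap.hasFDerivAt
      (x := NormedSpace.exp (u • G))).comp_hasDerivAt u h
  exact this

private lemma exp_comm_G' (G : Matrix S S ℝ) (a : ℝ) :
    G * NormedSpace.exp (a • G) = NormedSpace.exp (a • G) * G := by
  letI : SeminormedRing (Matrix S S ℝ) := Matrix.linftyOpSemiNormedRing
  letI : NormedRing (Matrix S S ℝ) := Matrix.linftyOpNormedRing
  letI : NormedAlgebra ℝ (Matrix S S ℝ) := Matrix.linftyOpNormedAlgebra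
  exact (((Commute.refl G).smul_right a).exp_right)

private lemma exp_mul_exp_neg' (G : Matrix S S ℝ) (a b : ℝ) (hab : a + b = 0) :
    NormedSpace.exp (a • G) * NormedSpace.exp (b • G) = 1 := by
  letI : SeminormedRing (Matrix S S ℝ) := Matrix.linftyOpSemiNormedRing
  letI : NormedRing (Matrix S S ℝ) := Matrix.linftyOpNormedRing
  letI : NormedAlgebra ℝ (Matrix S S ℝ) := Matrix.linftyOpNormedAlgebra
  have h := NormedSpace.exp_add_of_commute_of_mem_ball (𝕂 := ℝ) (((Commute.refl G).smul_left a).smul_right b)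
      ((NormedSpace.expSeries_radius_eq_top ℝ (Matrix S S ℝ)).symm ▸ edist_lt_top _ _) ((NormedSpace.expSeries_radius_eq_top ℝ (Matrix S S ℝ)).symm ▸ edist_lt_top _ _)
  rw [← add_smul, hab, zero_smul, NormedSpace.exp_zero] at h
  exact h.symm

private lemma exp_mulVec_pos' (G : Matrix S S ℝ) (hG : ∀ x y : S, x ≠ y → 0 ≤ G x y)
    (ψ : S → ℝ) (hψ : ∀ x : S, 0 < ψ x) (u : ℝ) (hu : 0 ≤ u) (x : S) :
    0 < (NormedSpace.exp (u • G)).mulVec ψ x := by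
  letI : SeminormedRing (Matrix S S ℝ) := Matrix.linftyOpSemiNormedRing
  letI : NormedRing (Matrix S S ℝ) := Matrix.linftyOpNormedRing
  letI : NormedAlgebra ℝ (Matrix S S ℝ) := Matrix.linftyOpNormedAlgebra
  set c : ℝ := ∑ z : S, |G z z| with hc
  have hcz : ∀ z : S, |G z z| ≤ c := fun z =>
    Finset.single_le_sum (f := fun z => |G z z|) (fun _ _ => abs_nonneg _) (Finset.mem_univ z)
  set H : Matrix S S ℝ := G + c • (1 : Matrix S S ℝ) with hH
  have hHnn : ∀ a b : S, 0 ≤ H a b := by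
    intro a b
    by_cases hab : a = b
    · subst hab
      have := hcz a
      have := neg_abs_le (G a a)
      simp only [hH, Matrix.add_apply, Matrix.smul_apply, Matrix.one_apply_eq, smul_eq_mul,
        mul_one]
      linarith
    · simpa [hH, Matrix.one_apply_ne hab] using hG a b hab
  have hpow : ∀ (n : ℕ) (a b : S), 0 ≤ (H ^ n) a b := by
    intro n
    induction n with
    | zero => intro a b; by_cases hab : a = b <;> simp [hab, Matrix.one_apply, le_of_lt]
    | succ n ih =>
      intro a b
      rw [pow_succ, Matrix.mul_apply]
      exact Finset.sum_nonneg fun z _ => mul_nonneg (ih a z) (hHnn z b)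
  have hsplit : NormedSpace.exp (u • G)
      = Real.exp (-(u * c)) • NormedSpace.exp (u • H) := by
    have h1 : u • H + (-(u * c)) • (1 : Matrix S S ℝ) = u • G := by
      rw [hH]; rw [smul_add, smul_smul]; module
    have hcomm : Commute (u • H) ((-(u * c)) • (1 : Matrix S S ℝ)) :=
      ((Commute.one_right (u • H)).smul_right _)
    rw [← h1]
    refine (NormedSpace.exp_add_of_commute_of_mem_ball (𝕂 := ℝ) hcomm
      ((NormedSpace.expSeries_radius_eq_top ℝ (Matrix S S ℝ)).symm ▸ edist_lt_top _ _) ((NormedSpace.expSeries_radius_eq_top ℝ (Matrix S S ℝ)).symm ▸ edist_lt_top _ _)).trans ?_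
    have : NormedSpace.exp ((-(u * c)) • (1 : Matrix S S ℝ))
        = Real.exp (-(u * c)) • (1 : Matrix S S ℝ) := by
      rw [← Algebra.algebraMap_eq_smul_one, ← Algebra.algebraMap_eq_smul_one,
        Real.exp_eq_exp_ℝ]
      exact (NormedSpace.algebraMap_exp_comm _).symm
    refine (congrArg (NormedSpace.exp (u • H) * ·) this).trans ?_
    rw [mul_smul_comm, mul_one]
  rw [hsplit]
  have hpos1 : (0:ℝ) < Real.exp (-(u * c)) := Real.exp_pos _
  rw [Matrix.smul_mulVec, Pi.smul_apply, smul_eq_mul]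
  refine mul_pos hpos1 ?_
  let lm : Matrix S S ℝ →ₗ[ℝ] ℝ :=
    { toFun := fun M => M.mulVec ψ x
      map_add' := fun M N => by simp [Matrix.add_mulVec]
      map_smul' := fun r M => by simp [Matrix.smul_mulVec] }
  let Φ : Matrix S S ℝ →L[ℝ] ℝ := LinearMap.toContinuousLinearMap lm
  have hsum : Summable fun n : ℕ => ((n.factorial : ℝ)⁻¹) • (u • H) ^ n :=
    NormedSpace.expSeries_summable' (𝕂 := ℝ) (u • H)
  have hexp : (NormedSpace.exp (u • H)).mulVec ψ x
      = ∑' n : ℕ, ((n.factorial : ℝ)⁻¹) • ((u • H) ^ n).mulVec ψ x := by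
    have := Φ.map_tsum hsum
    rw [NormedSpace.exp_eq_tsum ℝ]
    simpa [Φ, lm, Matrix.smul_mulVec] using this
  have hterm : ∀ n : ℕ, 0 ≤ ((n.factorial : ℝ)⁻¹) • ((u • H) ^ n).mulVec ψ x := by
    intro n
    have h1 : 0 ≤ ((u • H) ^ n).mulVec ψ x := by
      rw [smul_pow, Matrix.smul_mulVec]
      refine smul_nonneg (pow_nonneg hu n) ?_
      exact Finset.sum_nonneg fun z _ => mul_nonneg (hpow n x z) (hψ z).le
    positivity
  have hsum' : Summable fun n : ℕ => ((n.factorial : ℝ)⁻¹) • ((u • H) ^ n).mulVec ψ x := by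
    have := hsum.map Φ.toLinearMap.toAddMonoidHom Φ.continuous
    have heq : (fun n : ℕ => ((n.factorial : ℝ)⁻¹) • ((u • H) ^ n).mulVec ψ x)
        = (⇑Φ.toLinearMap.toAddMonoidHom ∘ fun n : ℕ => ((n.factorial : ℝ)⁻¹) • (u • H) ^ n) := by
      funext n
      simp [Φ, lm, Function.comp, Matrix.smul_mulVec]
    rw [heq]; exact this
  have h0 : (0:ℝ) < ((Nat.factorial 0 : ℝ)⁻¹) • ((u • H) ^ 0).mulVec ψ x := by
    simp [Matrix.one_mulVec]; exact hψ x
  calc (0:ℝ) < ((Nat.factorial 0 : ℝ)⁻¹) • ((u • H) ^ 0).mulVec ψ x := h0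
    _ ≤ ∑' n : ℕ, ((n.factorial : ℝ)⁻¹) • ((u • H) ^ n).mulVec ψ x :=
        Summable.le_tsum hsum' 0 fun n _ => hterm n
    _ = (NormedSpace.exp (u • H)).mulVec ψ x := hexp.symm

private lemma mulVec_exp_hasDerivAt' (G : Matrix S S ℝ) (ψ : S → ℝ) (u : ℝ) (x : S) :
    HasDerivAt (fun v : ℝ => (NormedSpace.exp (v • G)).mulVec ψ x)
      (G.mulVec ((NormedSpace.exp (u • G)).mulVec ψ) x) u := by
  have h : HasDerivAt (fun v : ℝ => ∑ y : S, NormedSpace.exp (v • G) x y * ψ y)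
      (∑ y : S, (G * NormedSpace.exp (u • G)) x y * ψ y) u :=
    HasDerivAt.fun_sum fun y _ => (entry_hasDerivAt' G u x y).mul_const (ψ y)
  have h1 : (fun v : ℝ => (NormedSpace.exp (v • G)).mulVec ψ x)
      = fun v : ℝ => ∑ y : S, NormedSpace.exp (v • G) x y * ψ y := by
    funext v; simp [Matrix.mulVec, dotProduct]
  have h2 : G.mulVec ((NormedSpace.exp (u • G)).mulVec ψ) x
      = ∑ y : S, (G * NormedSpace.exp (u • G)) x y * ψ y := by
    rw [Matrix.mulVec_mulVec]; simp [Matrix.mulVec, dotProduct]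
  rw [h1, h2]; exact h

private lemma sum_mulVec_swap' (G E : Matrix S S ℝ) (x : S) (w : S → ℝ) :
    ∑ y : S, E x y * (G.mulVec w y) = ∑ z : S, (E * G) x z * w z := by
  simp only [Matrix.mulVec, dotProduct, Matrix.mul_apply, Finset.mul_sum, Finset.sum_mul]
  rw [Finset.sum_comm]
  exact Finset.sum_congr rfl fun z _ => Finset.sum_congr rfl fun y _ => by ring

end AuxInhom

/-- The semigroup `P_{r,s} f (x) = (exp ((s−r)G)(m_{t−s}·f)) x / m_{t−r} x` (with
`m_s = exp (sG) ψ`) satisfies `P_{r,r} = id` and the forward evolution equation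
`d/ds P_{r,s} f = P_{r,s}(A_s f)` on `[r,t]`, where
`A_s f (x) = (G (m_{t−s}·f) x − (G m_{t−s}) x · f x)/m_{t−s} x`; moreover it is the
unique family of linear operators with these two properties. -/
theorem inhomogeneous_semigroup_evolution_and_uniqueness
    {S : Type*} [Fintype S] [Nonempty S] [DecidableEq S]
    (G : Matrix S S ℝ) (hG : ∀ x y : S, x ≠ y → 0 ≤ G x y)
    (ψ : S → ℝ) (hψ : ∀ x : S, 0 < ψ x)
    (t : ℝ) (ht : 0 < t)
    (m : ℝ → S → ℝ) (hm : ∀ s : ℝ, m s = (NormedSpace.exp (s • G)).mulVec ψ)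
    (P : ℝ → ℝ → (S → ℝ) → S → ℝ)
    (hP : ∀ (r s : ℝ) (f : S → ℝ) (x : S),
      P r s f x =
        (NormedSpace.exp ((s - r) • G)).mulVec (fun y => m (t - s) y * f y) x
          / m (t - r) x)
    (A : ℝ → (S → ℝ) → S → ℝ)
    (hA : ∀ (s : ℝ) (f : S → ℝ) (x : S),
      A s f x =
        (G.mulVec (fun y => m (t - s) y * f y) x - G.mulVec (m (t - s)) x * f x)
          / m (t - s) x) :
    -- (i) `P_{r,r} = id` and `s ↦ P_{r,s} f x` solves `d/ds P_{r,s} f = P_{r,s}(A_s f)` on `[r,t]`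
    (∀ r : ℝ, 0 ≤ r → r ≤ t →
      (∀ (f : S → ℝ) (x : S), P r r f x = f x) ∧
      (∀ (f : S → ℝ) (x : S), ∀ s ∈ Set.Icc r t,
        HasDerivWithinAt (fun u => P r u f x) (P r s (A s f) x) (Set.Icc r t) s)) ∧
    -- (ii) uniqueness among families of linear operators
    (∀ U : ℝ → ℝ → (S → ℝ) →ₗ[ℝ] (S → ℝ),
      (∀ r : ℝ, 0 ≤ r → r ≤ t → U r r = LinearMap.id) →
      (∀ r : ℝ, 0 ≤ r → r ≤ t → ∀ (f : S → ℝ) (x : S), ∀ s ∈ Set.Icc r t,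
        HasDerivWithinAt (fun u => U r u f x) (U r s (A s f) x) (Set.Icc r t) s) →
      ∀ r s : ℝ, 0 ≤ r → r ≤ s → s ≤ t → ∀ (f : S → ℝ) (x : S),
        U r s f x = P r s f x) := by
  classical
  have hmpos : ∀ u : ℝ, 0 ≤ u → ∀ x : S, 0 < m u x := by
    intro u hu x; rw [hm]; exact exp_mulVec_pos' G hG ψ hψ u hu x
  have hmne : ∀ u : ℝ, 0 ≤ u → ∀ x : S, m u x ≠ 0 := fun u hu x => (hmpos u hu x).ne'
  -- derivative of `u ↦ m (t - u) y`
  have hmd : ∀ (s₀ : ℝ) (y : S),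
      HasDerivAt (fun u : ℝ => m (t - u) y) (-(G.mulVec (m (t - s₀)) y)) s₀ := by
    intro s₀ y
    have h1 : HasDerivAt (fun v : ℝ => m v y) (G.mulVec (m (t - s₀)) y) (t - s₀) := by
      have h := mulVec_exp_hasDerivAt' G ψ (t - s₀) y
      have he : (fun v : ℝ => (NormedSpace.exp (v • G)).mulVec ψ y) = fun v => m v y := by
        funext v; rw [hm]
      rw [he] at h
      rwa [← hm] at h
    have h2 : HasDerivAt (fun u : ℝ => t - u) (-1) s₀ := by
      simpa using (hasDerivAt_const s₀ t).fun_sub (hasDerivAt_id s₀)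
    have := h1.comp s₀ h2
    simpa [Function.comp_def, mul_comm] using this
  refine ⟨?_, ?_⟩
  · -- part (i)
    intro r hr hrt
    constructor
    · intro f x
      rw [hP, sub_self, zero_smul, NormedSpace.exp_zero, Matrix.one_mulVec]
      exact mul_div_cancel_left₀ (f x) (hmne (t - r) (by linarith) x)
    · intro f x s hs
      obtain ⟨hrs, hst⟩ := hs
      have hrs' : (0:ℝ) ≤ t - s := by linarith
      have hnum : ∀ y : S, HasDerivAt
          (fun u : ℝ => NormedSpace.exp ((u - r) • G) x y * (m (t - u) y * f y))
          ((G * NormedSpace.exp ((s - r) • G)) x y * (m (t - s) y * f y)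
            + NormedSpace.exp ((s - r) • G) x y * (-(G.mulVec (m (t - s)) y) * f y)) s := by
        intro y
        have hE : HasDerivAt (fun u : ℝ => NormedSpace.exp ((u - r) • G) x y)
            ((G * NormedSpace.exp ((s - r) • G)) x y) s := by
          have h2 : HasDerivAt (fun u : ℝ => u - r) 1 s := by
            simpa using (hasDerivAt_id s).sub_const r
          have := (entry_hasDerivAt' G (s - r) x y).comp s h2
          simpa [Function.comp_def] using this
        have hM : HasDerivAt (fun u : ℝ => m (t - u) y * f y)
            (-(G.mulVec (m (t - s)) y) * f y) s := (hmd s y).mul_const (f y)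
        exact hE.mul hM
      have hsum : HasDerivAt
          (fun u : ℝ => ∑ y : S, NormedSpace.exp ((u - r) • G) x y * (m (t - u) y * f y))
          (∑ y : S, ((G * NormedSpace.exp ((s - r) • G)) x y * (m (t - s) y * f y)
            + NormedSpace.exp ((s - r) • G) x y * (-(G.mulVec (m (t - s)) y) * f y))) s :=
        HasDerivAt.fun_sum fun y _ => hnum y
      have hdiv := hsum.div_const (m (t - r) x)
      have hfun : (fun u : ℝ => P r u f x)
          = fun u : ℝ =>
            (∑ y : S, NormedSpace.exp ((u - r) • G) x y * (m (t - u) y * f y))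
              / m (t - r) x := by
        funext u; rw [hP]; simp [Matrix.mulVec, dotProduct]
      have hAval : ∀ y : S, m (t - s) y * A s f y
          = G.mulVec (fun z => m (t - s) z * f z) y - G.mulVec (m (t - s)) y * f y := by
        intro y
        rw [hA, mul_comm, div_mul_cancel₀ _ (hmne (t - s) hrs' y)]
      have hval : P r s (A s f) x
          = (∑ y : S, ((G * NormedSpace.exp ((s - r) • G)) x y * (m (t - s) y * f y)
            + NormedSpace.exp ((s - r) • G) x y * (-(G.mulVec (m (t - s)) y) * f y)))
              / m (t - r) x := by
        rw [hP]
        congr 1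
        have h1 : (NormedSpace.exp ((s - r) • G)).mulVec (fun y => m (t - s) y * A s f y) x
            = ∑ y : S, NormedSpace.exp ((s - r) • G) x y * (m (t - s) y * A s f y) := by
          simp [Matrix.mulVec, dotProduct]
        rw [h1]
        have h2 : ∀ y : S, NormedSpace.exp ((s - r) • G) x y * (m (t - s) y * A s f y)
            = NormedSpace.exp ((s - r) • G) x y
                * (G.mulVec (fun z => m (t - s) z * f z) y)
              + NormedSpace.exp ((s - r) • G) x y * (-(G.mulVec (m (t - s)) y) * f y) := by
          intro y; rw [hAval y]; ring
        calc ∑ y : S, NormedSpace.exp ((s - r) • G) x y * (m (t - s) y * A s f y)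
            = ∑ y : S, (NormedSpace.exp ((s - r) • G) x y
                  * (G.mulVec (fun z => m (t - s) z * f z) y)
                + NormedSpace.exp ((s - r) • G) x y
                  * (-(G.mulVec (m (t - s)) y) * f y)) :=
              Finset.sum_congr rfl fun y _ => h2 y
          _ = (∑ y : S, NormedSpace.exp ((s - r) • G) x y
                  * (G.mulVec (fun z => m (t - s) z * f z) y))
                + ∑ y : S, NormedSpace.exp ((s - r) • G) x y
                  * (-(G.mulVec (m (t - s)) y) * f y) := Finset.sum_add_distrib
          _ = (∑ y : S, (G * NormedSpace.exp ((s - r) • G)) x y * (m (t - s) y * f y))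
                + ∑ y : S, NormedSpace.exp ((s - r) • G) x y
                  * (-(G.mulVec (m (t - s)) y) * f y) := by
              rw [sum_mulVec_swap' G (NormedSpace.exp ((s - r) • G)) x
                (fun z => m (t - s) z * f z), ← exp_comm_G' G (s - r)]
          _ = ∑ y : S, ((G * NormedSpace.exp ((s - r) • G)) x y * (m (t - s) y * f y)
                + NormedSpace.exp ((s - r) • G) x y
                  * (-(G.mulVec (m (t - s)) y) * f y)) := Finset.sum_add_distrib.symm
      rw [hfun, hval]
      exact hdiv.hasDerivWithinAt
  · -- part (ii)
    intro U hid hder r s hr hrs hst f x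
    have hrt : r ≤ t := le_trans hrs hst
    set δ : S → (S → ℝ) := fun y => Pi.single y (1:ℝ) with hδ
    have hdecomp : ∀ g : S → ℝ, g = ∑ v : S, g v • δ v := by
      intro g; funext z
      rw [Finset.sum_apply]
      simp [hδ, Pi.single_apply]
    have hUapply : ∀ (u : ℝ) (g : S → ℝ) (z : S),
        U r u g z = ∑ v : S, g v * U r u (δ v) z := by
      intro u g z
      conv_lhs => rw [hdecomp g]
      rw [map_sum, Finset.sum_apply]
      refine Finset.sum_congr rfl fun v _ => ?_
      rw [(U r u).map_smul]
      simp
    -- the conserved quantities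
    set Φ : S → ℝ → ℝ := fun w u => ∑ y : S,
      U r u (δ y) x * (m (t - u) y)⁻¹ * NormedSpace.exp ((r - u) • G) y w with hΦdef
    have hΦ : ∀ w : S, ∀ u ∈ Set.Icc r t, HasDerivWithinAt (Φ w) 0 (Set.Icc r t) u := by
      intro w u hu
      have hut : (0:ℝ) ≤ t - u := by linarith [hu.2]
      have hμne : ∀ y : S, m (t - u) y ≠ 0 := fun y => hmne (t - u) hut y
      have hdM : ∀ y : S, HasDerivWithinAt (fun v : ℝ => U r v (δ y) x)
          (∑ z : S, A u (δ y) z * U r u (δ z) x) (Set.Icc r t) u := by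
        intro y
        have h := hder r hr hrt (δ y) x u hu
        rwa [hUapply u (A u (δ y)) x] at h
      have hdinv : ∀ y : S, HasDerivWithinAt (fun v : ℝ => (m (t - v) y)⁻¹)
          (-(-(G.mulVec (m (t - u)) y)) / m (t - u) y ^ 2) (Set.Icc r t) u :=
        fun y => (((hmd u y).inv (hμne y)).hasDerivWithinAt)
      have hdE : ∀ y : S, HasDerivWithinAt
          (fun v : ℝ => NormedSpace.exp ((r - v) • G) y w)
          (-((G * NormedSpace.exp ((r - u) • G)) y w)) (Set.Icc r t) u := by
        intro y
        have h2 : HasDerivAt (fun v : ℝ => r - v) (-1) u := by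
          simpa using (hasDerivAt_const u r).fun_sub (hasDerivAt_id u)
        have := (entry_hasDerivAt' G (r - u) y w).comp u h2
        have h3 : HasDerivAt (fun v : ℝ => NormedSpace.exp ((r - v) • G) y w)
            ((G * NormedSpace.exp ((r - u) • G)) y w * (-1)) u := by
          simpa [Function.comp_def] using this
        simpa [mul_neg_one] using h3.hasDerivWithinAt
      have hD : HasDerivWithinAt (Φ w)
          (∑ y : S,
            (((∑ z : S, A u (δ y) z * U r u (δ z) x) * (m (t - u) y)⁻¹
              + U r u (δ y) x * (-(-(G.mulVec (m (t - u)) y)) / m (t - u) y ^ 2))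
                * NormedSpace.exp ((r - u) • G) y w
            + U r u (δ y) x * (m (t - u) y)⁻¹
                * (-((G * NormedSpace.exp ((r - u) • G)) y w))))
          (Set.Icc r t) u := by
        rw [hΦdef]
        exact HasDerivWithinAt.fun_sum fun y _ => ((hdM y).mul (hdinv y)).mul (hdE y)
      -- the derivative vanishes
      have ha : ∀ z y : S, A u (δ y) z
          = (G z y * m (t - u) y - G.mulVec (m (t - u)) z * (if z = y then 1 else 0))
              / m (t - u) z := by
        intro z y
        rw [hA]
        congr 2
        · congr 1
          simp [Matrix.mulVec, dotProduct, hδ, Pi.single_apply, mul_ite,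
            Finset.sum_ite_eq']
        · simp [hδ, Pi.single_apply]
      have hzero : (∑ y : S,
            (((∑ z : S, A u (δ y) z * U r u (δ z) x) * (m (t - u) y)⁻¹
              + U r u (δ y) x * (-(-(G.mulVec (m (t - u)) y)) / m (t - u) y ^ 2))
                * NormedSpace.exp ((r - u) • G) y w
            + U r u (δ y) x * (m (t - u) y)⁻¹
                * (-((G * NormedSpace.exp ((r - u) • G)) y w)))) = 0 := by
        set e := NormedSpace.exp ((r - u) • G) with hedef
        set μ : S → ℝ := fun y => m (t - u) y with hμdef
        set g : S → ℝ := fun z => G.mulVec (m (t - u)) z with hgdef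
        set Mx : S → ℝ := fun z => U r u (δ z) x with hMdef
        have key1 : ∀ y : S, (∑ z : S, A u (δ y) z * Mx z) * (μ y)⁻¹ * e y w
            = (∑ z : S, Mx z * (μ z)⁻¹ * (G z y * e y w))
              - Mx y * (g y / μ y ^ 2) * e y w := by
          intro y
          have hterm : ∀ z : S, A u (δ y) z * Mx z * (μ y)⁻¹ * e y w
              = Mx z * (μ z)⁻¹ * (G z y * e y w)
                - (if z = y then Mx z * (μ z)⁻¹ * (g z / μ y) * e y w else 0) := by
            intro z
            rw [ha z y]
            by_cases hzy : z = y
            · subst hzy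
              simp only [eq_self_iff_true, if_true, hμdef, hgdef]
              field_simp [hμne z]
            · simp only [if_neg hzy, mul_zero, sub_zero, hμdef]
              field_simp [hμne y, hμne z]
          rw [Finset.sum_mul, Finset.sum_mul, Finset.sum_congr rfl fun z _ => hterm z,
            Finset.sum_sub_distrib, Finset.sum_ite_eq' Finset.univ y
              (fun z => Mx z * (μ z)⁻¹ * (g z / μ y) * e y w)]
          simp only [Finset.mem_univ, if_pos]
          congr 1
          have hpw : g y / μ y ^ 2 = (μ y)⁻¹ * (g y / μ y) := by
            rw [pow_two, ← div_div, div_eq_mul_inv, mul_comm]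
          calc Mx y * (μ y)⁻¹ * (g y / μ y) * e y w
              = Mx y * ((μ y)⁻¹ * (g y / μ y)) * e y w := by ring
            _ = Mx y * (g y / μ y ^ 2) * e y w := by rw [← hpw]
        have expand : ∀ y : S,
            (((∑ z : S, A u (δ y) z * Mx z) * (μ y)⁻¹
              + Mx y * (-(-(g y)) / μ y ^ 2)) * e y w
            + Mx y * (μ y)⁻¹ * (-((G * e) y w)))
            = (∑ z : S, Mx z * (μ z)⁻¹ * (G z y * e y w))
              - Mx y * (μ y)⁻¹ * ((G * e) y w) := by
          intro y
          have h1 : (((∑ z : S, A u (δ y) z * Mx z) * (μ y)⁻¹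
              + Mx y * (-(-(g y)) / μ y ^ 2)) * e y w
            + Mx y * (μ y)⁻¹ * (-((G * e) y w)))
              = (∑ z : S, A u (δ y) z * Mx z) * (μ y)⁻¹ * e y w
                + Mx y * (g y / μ y ^ 2) * e y w
                - Mx y * (μ y)⁻¹ * ((G * e) y w) := by ring
          rw [h1, key1 y]
          ring
        rw [Finset.sum_congr rfl fun y _ => expand y, Finset.sum_sub_distrib]
        rw [Finset.sum_comm]
        have hleft : ∀ z : S, (∑ y : S, Mx z * (μ z)⁻¹ * (G z y * e y w))
            = Mx z * (μ z)⁻¹ * ((G * e) z w) := by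
          intro z
          rw [Matrix.mul_apply, Finset.mul_sum]
        rw [Finset.sum_congr rfl fun z _ => hleft z, sub_self]
      exact hzero ▸ hD
    -- constancy on [r, t]
    have hconst : ∀ w : S, Φ w s = Φ w r := by
      intro w
      have hcont : ContinuousOn (Φ w) (Set.Icc r t) :=
        fun u hu => (hΦ w u hu).continuousWithinAt
      have := constant_of_has_deriv_right_zero hcont
        (fun u hu => (hΦ w u ⟨hu.1, hu.2.le⟩).mono_of_mem_nhdsWithin
          (Icc_mem_nhdsGE_of_mem hu))
      exact this s ⟨hrs, hst⟩
    -- value at r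
    have hMr : ∀ y : S, U r r (δ y) x = if x = y then 1 else 0 := by
      intro y
      rw [hid r hr hrt]
      simp [hδ, Pi.single_apply]
    have hΦr : ∀ w : S, Φ w r
        = (m (t - r) x)⁻¹ * (if x = w then 1 else 0) := by
      intro w
      rw [hΦdef]
      simp only [sub_self, zero_smul, NormedSpace.exp_zero]
      rw [Finset.sum_congr rfl fun y (_ : y ∈ Finset.univ) => by rw [hMr y]]
      rw [Finset.sum_eq_single x]
      · simp [Matrix.one_apply]
      · intro y _ hyx
        have hxy : x ≠ y := fun h => hyx h.symm
        simp [hxy]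
      · intro hx; exact absurd (Finset.mem_univ x) hx
    -- recovery of U from Φ
    have hrec : ∀ v : S, U r s (δ v) x
        = ∑ w : S, Φ w s * NormedSpace.exp ((s - r) • G) w v * m (t - s) v := by
      intro v
      have hst' : (0:ℝ) ≤ t - s := by linarith
      calc U r s (δ v) x
          = ∑ y : S, U r s (δ y) x * (m (t - s) y)⁻¹
              * ((NormedSpace.exp ((r - s) • G) * NormedSpace.exp ((s - r) • G)) y v)
              * m (t - s) v := by
            rw [exp_mul_exp_neg' G (r - s) (s - r) (by ring)]
            rw [Finset.sum_eq_single v]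
            · simp only [Matrix.one_apply_eq]
              rw [mul_one, mul_assoc, inv_mul_cancel₀ (hmne (t - s) hst' v), mul_one]
            · intro y _ hyv
              simp [Matrix.one_apply_ne hyv]
            · intro hv; exact absurd (Finset.mem_univ v) hv
        _ = ∑ y : S, ∑ w : S, U r s (δ y) x * (m (t - s) y)⁻¹
              * NormedSpace.exp ((r - s) • G) y w
              * NormedSpace.exp ((s - r) • G) w v * m (t - s) v := by
            refine Finset.sum_congr rfl fun y _ => ?_
            simp only [Matrix.mul_apply, Finset.mul_sum, Finset.sum_mul]
            refine Finset.sum_congr rfl fun w _ => ?_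
            ring
        _ = ∑ w : S, Φ w s * NormedSpace.exp ((s - r) • G) w v * m (t - s) v := by
            rw [Finset.sum_comm]
            refine Finset.sum_congr rfl fun w _ => ?_
            rw [hΦdef]
            simp only [Finset.sum_mul]
    -- final formula
    have hfinal : ∀ v : S, U r s (δ v) x
        = (m (t - r) x)⁻¹ * NormedSpace.exp ((s - r) • G) x v * m (t - s) v := by
      intro v
      rw [hrec v, Finset.sum_congr rfl fun w (_ : w ∈ Finset.univ) => by
        rw [hconst w, hΦr w]]
      rw [Finset.sum_eq_single x]
      · simp
      · intro w _ hwx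
        have hxw : x ≠ w := fun h => hwx h.symm
        simp [hxw]
      · intro hx; exact absurd (Finset.mem_univ x) hx
    rw [hUapply s f x, hP]
    have hmv : (NormedSpace.exp ((s - r) • G)).mulVec (fun y => m (t - s) y * f y) x
        = ∑ v : S, NormedSpace.exp ((s - r) • G) x v * (m (t - s) v * f v) := by
      simp [Matrix.mulVec, dotProduct]
    rw [hmv, div_eq_mul_inv, Finset.sum_mul]
    refine Finset.sum_congr rfl fun v _ => ?_
    rw [hfinal v]
    ring
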